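/- For every integer N ≥ 3, the inequality ( (2^{−2/N}−1)N + 2^{1−2/N} ) / ( (N−2)(N+2) ) < (N−2) / ( N²(N−1) ) holds. -/

import Mathlib

/-- Quadratic lower bound for `(1+y)^16` for `y ≥ 0`. -/
lemma pow16_lb (y : ℝ) (hy : 0 ≤ y) : 1 + 16*y + 120*y^2 ≤ (1 + y)^16 := by
  nlinarith [pow_nonneg hy 3, pow_nonneg hy 4, pow_nonneg hy 5, pow_nonneg hy 6,
    pow_nonneg hy 7, pow_nonneg hy 8, pow_nonneg hy 9, pow_nonneg hy 10,
    pow_nonneg hy 11, pow_nonneg hy 12, pow_nonneg hy 13, pow_nonneg hy 14,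
    pow_nonneg hy 15, pow_nonneg hy 16]

/-- `exp(-x) ≤ 1 - x + (17/32)x²` for `x ≥ 0`. -/
lemma exp_neg_le_quad (x : ℝ) (hx : 0 ≤ x) :
    Real.exp (-x) ≤ 1 - x + (17/32) * x^2 := by
  have h1 : 1 + x/16 ≤ Real.exp (x/16) := by
    have := Real.add_one_le_exp (x/16); linarith
  have h0 : (0:ℝ) ≤ 1 + x/16 := by linarith
  have h2 : (1 + x/16)^16 ≤ Real.exp x := by
    calc (1 + x/16)^16 ≤ (Real.exp (x/16))^16 := pow_le_pow_left₀ h0 h1 16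
    _ = Real.exp ((16:ℕ) * (x/16)) := (Real.exp_nat_mul _ 16).symm
    _ = Real.exp x := by push_cast; ring_nf
  have h3 : 1 + x + (15/32)*x^2 ≤ (1 + x/16)^16 := by
    have := pow16_lb (x/16) (by linarith)
    calc 1 + x + (15/32)*x^2 = 1 + 16*(x/16) + 120*(x/16)^2 := by ring
    _ ≤ (1 + x/16)^16 := this
  have hpos : (0:ℝ) < 1 + x + (15/32)*x^2 := by positivity
  have h4 : Real.exp (-x) ≤ 1/(1 + x + (15/32)*x^2) := by
    rw [Real.exp_neg]
    rw [inv_eq_one_div]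
    apply one_div_le_one_div_of_le hpos
    linarith
  have h5 : 1/(1 + x + (15/32)*x^2) ≤ 1 - x + (17/32)*x^2 := by
    rw [div_le_iff₀ hpos]
    nlinarith [pow_nonneg hx 3, pow_nonneg hx 4]
  linarith

set_option maxHeartbeats 1000000 in
/-- For every integer `N ≥ 3`,
`((2^{-2/N} - 1)N + 2^{1-2/N}) / ((N-2)(N+2)) < (N-2) / (N²(N-1))`. -/
theorem statement16 (N : ℕ) (hN : 3 ≤ N) :
    (((2 : ℝ) ^ (-(2 / (N : ℝ))) - 1) * N + (2 : ℝ) ^ (1 - 2 / (N : ℝ)))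
      / (((N : ℝ) - 2) * ((N : ℝ) + 2))
    < ((N : ℝ) - 2) / ((N : ℝ) ^ 2 * ((N : ℝ) - 1)) := by
  have hx : (3:ℝ) ≤ (N:ℝ) := by exact_mod_cast hN
  set x : ℝ := (N:ℝ) with hxdef
  have hx0 : (0:ℝ) < x := by linarith
  set L : ℝ := Real.log 2 with hLdef
  have hL1 : 0.6931471803 < L := Real.log_two_gt_d9
  have hL2 : L < 0.6931471808 := Real.log_two_lt_d9
  set E : ℝ := (2:ℝ) ^ (-(2 / x)) with hEdef
  -- rewrite 2^(1 - 2/x) = 2 * E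
  have hsplit : (2:ℝ) ^ (1 - 2 / x) = 2 * E := by
    rw [hEdef, show (1 : ℝ) - 2/x = 1 + (-(2/x)) by ring,
      Real.rpow_add (by norm_num : (0:ℝ) < 2), Real.rpow_one]
  -- E = exp(-(2L/x))
  have hEexp : E = Real.exp (-(2*L/x)) := by
    rw [hEdef, Real.rpow_def_of_pos (by norm_num : (0:ℝ) < 2)]
    rw [← hLdef]
    ring_nf
  have hu : 0 ≤ 2*L/x := by positivity
  have hE : E ≤ 1 - 2*L/x + (17/32) * (2*L/x)^2 := by
    rw [hEexp]; exact exp_neg_le_quad _ hu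
  have hE2 : E * x^2 ≤ x^2 - 2*L*x + (17/8)*L^2 := by
    have h := mul_le_mul_of_nonneg_right hE (by positivity : (0:ℝ) ≤ x^2)
    have heq : (1 - 2*L/x + (17/32) * (2*L/x)^2) * x^2
        = x^2 - 2*L*x + (17/8)*L^2 := by
      field_simp
      ring
    linarith [heq ▸ h]
  rw [div_lt_div_iff₀ (by nlinarith) (by nlinarith)]
  rw [hsplit]
  -- goal: ((E-1)*x + 2*E) * (x^2*(x-1)) < (x-2)*((x-2)*(x+2))
  have hfac : ((E-1)*x + 2*E) * (x^2*(x-1))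
      = (E*x^2) * ((x+2)*(x-1)) - x^3*(x-1) := by ring
  have hnn : (0:ℝ) ≤ (x+2)*(x-1) := by nlinarith
  have hmul := mul_le_mul_of_nonneg_right hE2 hnn
  rw [hfac]
  have h3 : (0:ℝ) ≤ x - 3 := by linarith
  have hL2sq : L^2 < 0.4804530143 := by nlinarith [hL1, hL2]
  have t1 : (0:ℝ) ≤ (2*L-1)*(x-3)^3 :=
    mul_nonneg (by linarith) (pow_nonneg h3 3)
  have t2 : (0:ℝ) ≤ (20*L-9-(17/8)*L^2)*(x-3)^2 :=
    mul_nonneg (by nlinarith) (sq_nonneg _)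
  have t3 : (0:ℝ) ≤ (62*L-31-(119/8)*L^2)*(x-3) :=
    mul_nonneg (by nlinarith) h3
  have t4 : (0:ℝ) < 60*L-31-(170/8)*L^2 := by nlinarith
  nlinarith [hmul, t1, t2, t3, t4]
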